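/- Let K = (T, A)_ω be an ALCHIO weighted knowledge base. If some interpretation has finite cost, then the optimal cost of K_ω satisfies optc(K_ω) ≤ W · (n·|A| + n²·|T|), where W is the maximum finite weight assigned by ω and n = |A| + |T| + 2^{2|T|²}. -/

import Mathlib

namespace DL

/-! ### Syntax -/

abbrev IndName := ℕ
abbrev CName := ℕ
abbrev RName := ℕ

/-- Roles: role names and inverse roles. -/
inductive Role where
  | name : RName → Role
  | inv  : RName → Role
deriving DecidableEq

/-- `ALCHIO` concepts. -/
inductive Concept where
  | top  : Concept
  | bot  : Concept
  | atom : CName → Concept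
  | nom  : IndName → Concept
  | neg  : Concept → Concept
  | conj : Concept → Concept → Concept
  | ex   : Role → Concept → Concept
deriving DecidableEq

/-- TBox axioms: concept inclusions and role inclusions. -/
inductive Axiom where
  | ci : Concept → Concept → Axiom
  | ri : Role → Role → Axiom
deriving DecidableEq

/-- ABox assertions. -/
inductive Assertion where
  | ca : CName → IndName → Assertion
  | ra : RName → IndName → IndName → Assertion
deriving DecidableEq

/-! ### Interpretations -/

/-- A DL interpretation with domain a subset of a universe `U`.  Individual names are
interpreted via `indI` (under the standard names assumption, the individual names of the
ABox under consideration are interpreted "as themselves", i.e. injectively). -/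
structure Interp (U : Type) where
  dom : Set U
  indI : IndName → U
  cI : CName → Set U
  rI : RName → Set (U × U)
  cI_sub : ∀ A, cI A ⊆ dom
  rI_sub : ∀ r p, p ∈ rI r → p.1 ∈ dom ∧ p.2 ∈ dom

variable {U : Type}

/-- Every individual name denotes an element of the domain. -/
def Interp.Proper (I : Interp U) : Prop := ∀ a, I.indI a ∈ I.dom

def Role.interp (I : Interp U) : Role → Set (U × U)
  | Role.name r => I.rI r
  | Role.inv r  => {p | (p.2, p.1) ∈ I.rI r}

def Concept.interp (I : Interp U) : Concept → Set U
  | Concept.top => I.dom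
  | Concept.bot => ∅
  | Concept.atom A => I.cI A
  | Concept.nom a => {I.indI a} ∩ I.dom
  | Concept.neg C => I.dom \ Concept.interp I C
  | Concept.conj C D => Concept.interp I C ∩ Concept.interp I D
  | Concept.ex r C => {d | ∃ e, (d, e) ∈ Role.interp I r ∧ e ∈ Concept.interp I C}

def Assertion.sat (I : Interp U) : Assertion → Prop
  | Assertion.ca A a => I.indI a ∈ I.cI A
  | Assertion.ra r a b => (I.indI a, I.indI b) ∈ I.rI r

/-! ### Violations and cost -/

/-- Violations of a concept inclusion `C ⊑ D`. -/
def vioCI (I : Interp U) (C D : Concept) : Set U :=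
  Concept.interp I C \ Concept.interp I D

/-- Violations of a role inclusion `r ⊑ s`. -/
def vioRI (I : Interp U) (r s : Role) : Set (U × U) :=
  Role.interp I r \ Role.interp I s

/-- The number of violations of an axiom. -/
noncomputable def Axiom.vioCount (I : Interp U) : Axiom → ℕ∞
  | Axiom.ci C D => (vioCI I C D).encard
  | Axiom.ri r s => (vioRI I r s).encard

open Classical in
/-- The cost of an interpretation w.r.t. a weighted knowledge base `(T, A)` with weight
functions `wT` (on TBox axioms) and `wA` (on ABox assertions). -/
noncomputable def cost (T : Finset Axiom) (A : Finset Assertion)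
    (wT : Axiom → ℕ∞) (wA : Assertion → ℕ∞) (I : Interp U) : ℕ∞ :=
  (∑ τ ∈ T, wT τ * Axiom.vioCount I τ) +
    ∑ α ∈ A, (if Assertion.sat I α then 0 else wA α)

/-! ### Queries -/

inductive Term where
  | var : ℕ → Term
  | ind : IndName → Term
deriving DecidableEq

inductive QAtom where
  | ca : CName → Term → QAtom
  | ra : RName → Term → Term → QAtom
deriving DecidableEq

/-- A Boolean conjunctive query: a finite set of atoms, all of whose variables are
(implicitly) existentially quantified. -/
abbrev BCQ := Finset QAtom

def Term.eval (I : Interp U) (π : ℕ → U) : Term → U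
  | Term.var v => π v
  | Term.ind a => I.indI a

def QAtom.sat (I : Interp U) (π : ℕ → U) : QAtom → Prop
  | QAtom.ca A t => Term.eval I π t ∈ I.cI A
  | QAtom.ra r t t' => (Term.eval I π t, Term.eval I π t') ∈ I.rI r

/-- Satisfaction of a BCQ in an interpretation. -/
def satQ (I : Interp U) (q : BCQ) : Prop :=
  ∃ π : ℕ → U, (∀ v, π v ∈ I.dom) ∧ ∀ a ∈ q, QAtom.sat I π a

/-- An instance query is a BCQ with a single atom. -/
def IsIQ (q : BCQ) : Prop := ∃ a : QAtom, q = {a}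

/-! ### Cost-based semantics -/

/-- `k`-satisfiability: some interpretation has cost at most `k`. -/
def ksat (T : Finset Axiom) (A : Finset Assertion)
    (wT : Axiom → ℕ∞) (wA : Assertion → ℕ∞) (k : ℕ) : Prop :=
  ∃ (U : Type) (I : Interp U), I.Proper ∧ cost T A wT wA I ≤ (k : ℕ∞)

/-- `K ⊨ₚᵏ q`: some interpretation of cost at most `k` satisfies `q`. -/
def satP (T : Finset Axiom) (A : Finset Assertion)
    (wT : Axiom → ℕ∞) (wA : Assertion → ℕ∞) (k : ℕ) (q : BCQ) : Prop :=
  ∃ (U : Type) (I : Interp U), I.Proper ∧ cost T A wT wA I ≤ (k : ℕ∞) ∧ satQ I q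

/-- `K ⊨꜀ᵏ q`: every interpretation of cost at most `k` satisfies `q`. -/
def satC (T : Finset Axiom) (A : Finset Assertion)
    (wT : Axiom → ℕ∞) (wA : Assertion → ℕ∞) (k : ℕ) (q : BCQ) : Prop :=
  ∀ (U : Type) (I : Interp U), I.Proper → cost T A wT wA I ≤ (k : ℕ∞) → satQ I q

/-- The optimal cost of a weighted knowledge base. -/
noncomputable def optCost (T : Finset Axiom) (A : Finset Assertion)
    (wT : Axiom → ℕ∞) (wA : Assertion → ℕ∞) : ℕ∞ :=
  sInf {c : ℕ∞ | ∃ (U : Type) (I : Interp U), I.Proper ∧ cost T A wT wA I = c}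

/-- `K ⊨ₚᵒᵖᵗ q`: some interpretation of optimal cost satisfies `q`. -/
noncomputable def satPopt (T : Finset Axiom) (A : Finset Assertion)
    (wT : Axiom → ℕ∞) (wA : Assertion → ℕ∞) (q : BCQ) : Prop :=
  ∃ (U : Type) (I : Interp U), I.Proper ∧ cost T A wT wA I = optCost T A wT wA ∧ satQ I q

/-- `K ⊨꜀ᵒᵖᵗ q`: every interpretation of optimal cost satisfies `q`. -/
noncomputable def satCopt (T : Finset Axiom) (A : Finset Assertion)
    (wT : Axiom → ℕ∞) (wA : Assertion → ℕ∞) (q : BCQ) : Prop :=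
  ∀ (U : Type) (I : Interp U), I.Proper → cost T A wT wA I = optCost T A wT wA → satQ I q

/-! ### Occurrences of symbols -/

def Role.base : Role → RName
  | Role.name r => r
  | Role.inv r => r

def Concept.cnames : Concept → Finset CName
  | Concept.atom A => {A}
  | Concept.neg C => C.cnames
  | Concept.conj C D => C.cnames ∪ D.cnames
  | Concept.ex _ C => C.cnames
  | _ => ∅

def Concept.rnames : Concept → Finset RName
  | Concept.neg C => C.rnames
  | Concept.conj C D => C.rnames ∪ D.rnames
  | Concept.ex r C => insert r.base C.rnames
  | _ => ∅

def Concept.indNames : Concept → Finset IndName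
  | Concept.nom a => {a}
  | Concept.neg C => C.indNames
  | Concept.conj C D => C.indNames ∪ D.indNames
  | Concept.ex _ C => C.indNames
  | _ => ∅

def Axiom.cnames : Axiom → Finset CName
  | Axiom.ci C D => C.cnames ∪ D.cnames
  | Axiom.ri _ _ => ∅

def Axiom.rnames : Axiom → Finset RName
  | Axiom.ci C D => C.rnames ∪ D.rnames
  | Axiom.ri r s => {r.base, s.base}

def Axiom.indNames : Axiom → Finset IndName
  | Axiom.ci C D => C.indNames ∪ D.indNames
  | Axiom.ri _ _ => ∅

def Assertion.cnames : Assertion → Finset CName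
  | Assertion.ca A _ => {A}
  | Assertion.ra _ _ _ => ∅

def Assertion.rnames : Assertion → Finset RName
  | Assertion.ca _ _ => ∅
  | Assertion.ra r _ _ => {r}

def Assertion.indNames : Assertion → Finset IndName
  | Assertion.ca _ a => {a}
  | Assertion.ra _ a b => {a, b}

/-- The individual names occurring in an ABox. -/
def aboxInds (A : Finset Assertion) : Finset IndName := A.biUnion Assertion.indNames

/-- The individual names occurring in a KB. -/
def kbInds (T : Finset Axiom) (A : Finset Assertion) : Finset IndName :=
  T.biUnion Axiom.indNames ∪ aboxInds A

def Term.indNames : Term → Finset IndName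
  | Term.var _ => ∅
  | Term.ind a => {a}

def QAtom.indNames : QAtom → Finset IndName
  | QAtom.ca _ t => t.indNames
  | QAtom.ra _ t t' => t.indNames ∪ t'.indNames

def QAtom.cnames : QAtom → Finset CName
  | QAtom.ca A _ => {A}
  | QAtom.ra _ _ _ => ∅

def qInds (q : BCQ) : Finset IndName := q.biUnion QAtom.indNames

def qCnames (q : BCQ) : Finset CName := q.biUnion QAtom.cnames

/-! ### Sizes -/

def Concept.size : Concept → ℕ
  | Concept.top => 1
  | Concept.bot => 1
  | Concept.atom _ => 1
  | Concept.nom _ => 1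
  | Concept.neg C => C.size + 1
  | Concept.conj C D => C.size + D.size + 1
  | Concept.ex _ C => C.size + 2

def Axiom.size : Axiom → ℕ
  | Axiom.ci C D => C.size + D.size + 1
  | Axiom.ri _ _ => 3

def Assertion.size : Assertion → ℕ
  | Assertion.ca _ _ => 2
  | Assertion.ra _ _ _ => 3

def tboxSize (T : Finset Axiom) : ℕ := ∑ τ ∈ T, τ.size

def aboxSize (A : Finset Assertion) : ℕ := ∑ α ∈ A, α.size

/-! ### DL-Lite fragments -/

/-- Basic concepts: concept names and unqualified existential restrictions `∃r` (with a
possibly inverse role `r`), the latter rendered as `∃r.⊤`. -/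
inductive IsBasic : Concept → Prop
  | atom (A : CName) : IsBasic (Concept.atom A)
  | ex (r : Role) : IsBasic (Concept.ex r Concept.top)

/-- A `DL-Lite_core` axiom: `B ⊑ C` or `B ⊓ C ⊑ ⊥` with `B, C` basic concepts. -/
def IsCoreAxiom (τ : Axiom) : Prop :=
  (∃ B C, τ = Axiom.ci B C ∧ IsBasic B ∧ IsBasic C) ∨
  (∃ B C, τ = Axiom.ci (Concept.conj B C) Concept.bot ∧ IsBasic B ∧ IsBasic C)

def IsDLLiteCore (T : Finset Axiom) : Prop := ∀ τ ∈ T, IsCoreAxiom τ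

/-- Concepts built from basic concepts using `¬`, `⊓` (and hence also `⊔`). -/
inductive IsBoolConcept : Concept → Prop
  | basic {C} : IsBasic C → IsBoolConcept C
  | neg {C} : IsBoolConcept C → IsBoolConcept (Concept.neg C)
  | conj {C D} : IsBoolConcept C → IsBoolConcept D → IsBoolConcept (Concept.conj C D)

/-- A `DL-Lite_bool^H` axiom: a concept inclusion between Boolean combinations of basic
concepts, or a role inclusion. -/
def IsBoolHAxiom (τ : Axiom) : Prop :=
  (∃ C D, τ = Axiom.ci C D ∧ IsBoolConcept C ∧ IsBoolConcept D) ∨ (∃ r s, τ = Axiom.ri r s)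

def IsDLLiteBoolH (T : Finset Axiom) : Prop := ∀ τ ∈ T, IsBoolHAxiom τ

/-- The maximum finite weight assigned by the weight functions (`∞` weights contribute
`0` via `ENat.toNat`). -/
noncomputable def maxFinWeight (T : Finset Axiom) (A : Finset Assertion)
    (wT : Axiom → ℕ∞) (wA : Assertion → ℕ∞) : ℕ :=
  (T.sup fun τ => (wT τ).toNat) ⊔ (A.sup fun α => (wA α).toNat)

/-! ### Auxiliary material for Statement 5 -/

section Statement5Aux

variable {U : Type}

lemma roleInterp_sub (I : Interp U) (r : Role) {p : U × U} (hp : p ∈ Role.interp I r) :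
    p.1 ∈ I.dom ∧ p.2 ∈ I.dom := by
  cases r with
  | name r => exact I.rI_sub r p hp
  | inv r => exact ⟨(I.rI_sub r (p.2, p.1) hp).2, (I.rI_sub r (p.2, p.1) hp).1⟩

lemma interp_sub (I : Interp U) (C : Concept) : Concept.interp I C ⊆ I.dom := by
  induction C with
  | top => exact subset_rfl
  | bot => exact Set.empty_subset _
  | atom A => exact I.cI_sub A
  | nom a => exact Set.inter_subset_right
  | neg C ih => exact Set.diff_subset
  | conj C D ihC ihD => exact fun x hx => ihC hx.1
  | ex r C ih =>
      rintro d ⟨e, hre, -⟩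
      exact (roleInterp_sub I r hre).1

/-- All subconcepts of a concept (including itself). -/
def subsC : Concept → Finset Concept
  | .neg C => insert (.neg C) (subsC C)
  | .conj C D => insert (.conj C D) (subsC C ∪ subsC D)
  | .ex r C => insert (.ex r C) (subsC C)
  | C => {C}

lemma mem_subsC_self (C : Concept) : C ∈ subsC C := by
  cases C <;> simp [subsC]

lemma subsC_trans : ∀ C D : Concept, D ∈ subsC C → subsC D ⊆ subsC C := by
  intro C
  induction C with
  | top => intro D hD; simp only [subsC, Finset.mem_singleton] at hD; subst hD; exact subset_rfl
  | bot => intro D hD; simp only [subsC, Finset.mem_singleton] at hD; subst hD; exact subset_rfl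
  | atom A => intro D hD; simp only [subsC, Finset.mem_singleton] at hD; subst hD; exact subset_rfl
  | nom a => intro D hD; simp only [subsC, Finset.mem_singleton] at hD; subst hD; exact subset_rfl
  | neg C ih =>
      intro D hD
      rw [show subsC (.neg C) = insert (.neg C) (subsC C) from rfl] at hD ⊢
      rcases Finset.mem_insert.mp hD with h | h
      · subst h; exact subset_rfl
      · exact (ih D h).trans (Finset.subset_insert _ _)
  | conj C C' ihC ihC' =>
      intro D hD
      rw [show subsC (.conj C C') = insert (.conj C C') (subsC C ∪ subsC C') from rfl] at hD ⊢
      rcases Finset.mem_insert.mp hD with h | h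
      · subst h; exact subset_rfl
      · rcases Finset.mem_union.mp h with h | h
        · exact (ihC D h).trans ((Finset.subset_union_left).trans (Finset.subset_insert _ _))
        · exact (ihC' D h).trans ((Finset.subset_union_right).trans (Finset.subset_insert _ _))
  | ex r C ih =>
      intro D hD
      rw [show subsC (.ex r C) = insert (.ex r C) (subsC C) from rfl] at hD ⊢
      rcases Finset.mem_insert.mp hD with h | h
      · subst h; exact subset_rfl
      · exact (ih D h).trans (Finset.subset_insert _ _)

lemma card_subsC_le (C : Concept) : (subsC C).card ≤ C.size := by
  induction C with
  | top => simp [subsC, Concept.size]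
  | bot => simp [subsC, Concept.size]
  | atom A => simp [subsC, Concept.size]
  | nom a => simp [subsC, Concept.size]
  | neg C ih =>
      calc (subsC (.neg C)).card ≤ (subsC C).card + 1 := Finset.card_insert_le _ _
        _ ≤ C.size + 1 := by omega
  | conj C D ihC ihD =>
      calc (subsC (.conj C D)).card ≤ (subsC C ∪ subsC D).card + 1 := Finset.card_insert_le _ _
        _ ≤ ((subsC C).card + (subsC D).card) + 1 := by
            have := Finset.card_union_le (subsC C) (subsC D); omega
        _ ≤ C.size + D.size + 1 := by omega
  | ex r C ih =>
      calc (subsC (.ex r C)).card ≤ (subsC C).card + 1 := Finset.card_insert_le _ _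
        _ ≤ C.size + 2 := by omega

lemma nom_mem_subsC {a : IndName} : ∀ {C : Concept}, Concept.nom a ∈ subsC C → a ∈ C.indNames := by
  intro C
  induction C with
  | top => intro h; simp [subsC] at h
  | bot => intro h; simp [subsC] at h
  | atom A => intro h; simp [subsC] at h
  | nom b =>
      intro h
      simp only [subsC, Finset.mem_singleton, Concept.nom.injEq] at h
      simp [Concept.indNames, h]
  | neg C ih =>
      intro h
      rcases Finset.mem_insert.mp h with h | h
      · exact absurd h (by simp)
      · exact ih h
  | conj C D ihC ihD =>
      intro h
      rcases Finset.mem_insert.mp h with h | h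
      · exact absurd h (by simp)
      · rcases Finset.mem_union.mp h with h | h
        · exact Finset.mem_union_left _ (ihC h)
        · exact Finset.mem_union_right _ (ihD h)
  | ex r C ih =>
      intro h
      rcases Finset.mem_insert.mp h with h | h
      · exact absurd h (by simp)
      · exact ih h

lemma card_indNames_le (C : Concept) : C.indNames.card ≤ C.size := by
  induction C with
  | top => simp [Concept.indNames, Concept.size]
  | bot => simp [Concept.indNames, Concept.size]
  | atom A => simp [Concept.indNames, Concept.size]
  | nom a => simp [Concept.indNames, Concept.size]
  | neg C ih => simp only [Concept.indNames, Concept.size]; omega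
  | conj C D ihC ihD =>
      simp only [Concept.indNames, Concept.size]
      have := Finset.card_union_le C.indNames D.indNames; omega
  | ex r C ih => simp only [Concept.indNames, Concept.size]; omega

lemma axiom_indNames_card (τ : Axiom) : (Axiom.indNames τ).card ≤ τ.size := by
  cases τ with
  | ci C D =>
      simp only [Axiom.indNames, Axiom.size]
      have h := Finset.card_union_le C.indNames D.indNames
      have := card_indNames_le C; have := card_indNames_le D; omega
  | ri r s => simp [Axiom.indNames, Axiom.size]

lemma assertion_indNames_card (α : Assertion) : (Assertion.indNames α).card ≤ α.size := by
  cases α with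
  | ca A a => simp [Assertion.indNames, Assertion.size]
  | ra r a b =>
      simp only [Assertion.indNames, Assertion.size]
      have := Finset.card_insert_le a ({b} : Finset IndName)
      simp at this ⊢; omega

/-- Subconcepts occurring in an axiom. -/
def axSubs : Axiom → Finset Concept
  | .ci C D => subsC C ∪ subsC D
  | .ri _ _ => ∅

lemma axSubs_card (τ : Axiom) : (axSubs τ).card ≤ τ.size := by
  cases τ with
  | ci C D =>
      simp only [axSubs, Axiom.size]
      have h := Finset.card_union_le (subsC C) (subsC D)
      have := card_subsC_le C; have := card_subsC_le D; omega
  | ri r s => simp [axSubs, Axiom.size]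

lemma axSubs_trans {τ : Axiom} {X Y : Concept} (hX : X ∈ axSubs τ) (hY : Y ∈ subsC X) :
    Y ∈ axSubs τ := by
  cases τ with
  | ci C D =>
      simp only [axSubs, Finset.mem_union] at hX ⊢
      rcases hX with h | h
      · exact Or.inl (subsC_trans _ _ h hY)
      · exact Or.inr (subsC_trans _ _ h hY)
  | ri r s => simp [axSubs] at hX

open Classical in
/-- The type of an element: the concepts of `cl` it satisfies. -/
noncomputable def typeOf (I : Interp U) (cl : Finset Concept) (d : U) : Finset Concept :=
  cl.filter (fun C => d ∈ Concept.interp I C)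

lemma mem_typeOf {I : Interp U} {cl : Finset Concept} {d : U} {C : Concept} (hC : C ∈ cl) :
    C ∈ typeOf I cl d ↔ d ∈ Concept.interp I C := by
  classical
  simp [typeOf, Finset.mem_filter, hC]

lemma typeOf_subset (I : Interp U) (cl : Finset Concept) (d : U) : typeOf I cl d ⊆ cl := by
  classical
  intro x hx
  simp only [typeOf, Finset.mem_filter] at hx
  exact hx.1

open Classical in
/-- A representative of a type. -/
noncomputable def rep (I : Interp U) (cl : Finset Concept) (t : Finset Concept) : U :=
  if h : ∃ d, d ∈ I.dom ∧ typeOf I cl d = t then h.choose else I.indI 0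

lemma rep_spec {I : Interp U} {cl : Finset Concept} {d : U} (hd : d ∈ I.dom) :
    rep I cl (typeOf I cl d) ∈ I.dom ∧
      typeOf I cl (rep I cl (typeOf I cl d)) = typeOf I cl d := by
  have h : ∃ e, e ∈ I.dom ∧ typeOf I cl e = typeOf I cl d := ⟨d, hd, rfl⟩
  rw [rep, dif_pos h]
  exact h.choose_spec

open Classical in
/-- The projection collapsing anonymous elements to type representatives. -/
noncomputable def pr (I : Interp U) (cl : Finset Concept) (Nm : Finset U) (d : U) : U :=
  if d ∈ Nm then d else if d ∈ I.dom then rep I cl (typeOf I cl d) else d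

lemma pr_of_mem {I : Interp U} {cl : Finset Concept} {Nm : Finset U} {d : U} (hd : d ∈ Nm) :
    pr I cl Nm d = d := by rw [pr, if_pos hd]

lemma pr_mem {I : Interp U} {cl : Finset Concept} {Nm : Finset U}
    (hN : ↑Nm ⊆ I.dom) {d : U} (hd : d ∈ I.dom) : pr I cl Nm d ∈ I.dom := by
  by_cases h1 : d ∈ Nm
  · rw [pr_of_mem h1]; exact hd
  · rw [pr, if_neg h1, if_pos hd]; exact (rep_spec hd).1

lemma typeOf_pr {I : Interp U} {cl : Finset Concept} {Nm : Finset U} {d : U} (hd : d ∈ I.dom) :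
    typeOf I cl (pr I cl Nm d) = typeOf I cl d := by
  by_cases h1 : d ∈ Nm
  · rw [pr_of_mem h1]
  · rw [pr, if_neg h1, if_pos hd]; exact (rep_spec hd).2

/-- The filtrated interpretation. -/
noncomputable def filt (I : Interp U) (cl : Finset Concept) (Nm : Finset U) : Interp U where
  dom := pr I cl Nm '' I.dom
  indI a := pr I cl Nm (I.indI a)
  cI A := (pr I cl Nm '' I.dom) ∩ I.cI A
  rI r := (fun p => (pr I cl Nm p.1, pr I cl Nm p.2)) '' I.rI r
  cI_sub A := Set.inter_subset_left
  rI_sub r p hp := by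
    obtain ⟨⟨a, b⟩, hab, rfl⟩ := hp
    have h := I.rI_sub r (a, b) hab
    exact ⟨⟨a, h.1, rfl⟩, ⟨b, h.2, rfl⟩⟩

lemma filt_role (I : Interp U) (cl : Finset Concept) (Nm : Finset U) (r : Role) :
    Role.interp (filt I cl Nm) r =
      (fun p => (pr I cl Nm p.1, pr I cl Nm p.2)) '' Role.interp I r := by
  cases r with
  | name r => rfl
  | inv r =>
      ext ⟨x, y⟩
      constructor
      · rintro ⟨⟨a, b⟩, hab, heq⟩
        refine ⟨(b, a), hab, ?_⟩
        have h1 : pr I cl Nm a = y := congrArg Prod.fst heq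
        have h2 : pr I cl Nm b = x := congrArg Prod.snd heq
        simp [h1, h2]
      · rintro ⟨⟨a, b⟩, hab, heq⟩
        have h1 : pr I cl Nm a = x := congrArg Prod.fst heq
        have h2 : pr I cl Nm b = y := congrArg Prod.snd heq
        exact ⟨(b, a), hab, by simp [Role.interp, h1, h2]⟩

lemma truth (I : Interp U) (cl : Finset Concept) (Nm : Finset U)
    (hP : I.Proper) (hN : ↑Nm ⊆ I.dom)
    (hneg : ∀ D, Concept.neg D ∈ cl → D ∈ cl)
    (hconj : ∀ D E, Concept.conj D E ∈ cl → D ∈ cl ∧ E ∈ cl)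
    (hex : ∀ r D, Concept.ex r D ∈ cl → D ∈ cl)
    (hnom : ∀ a, Concept.nom a ∈ cl → I.indI a ∈ Nm) :
    ∀ C : Concept, C ∈ cl → ∀ d, d ∈ I.dom →
      (pr I cl Nm d ∈ Concept.interp (filt I cl Nm) C ↔ d ∈ Concept.interp I C) := by
  have hprdom : ∀ d, d ∈ I.dom → pr I cl Nm d ∈ (filt I cl Nm).dom :=
    fun d hd => ⟨d, hd, rfl⟩
  have hsame : ∀ {d e : U}, d ∈ I.dom → e ∈ I.dom →
      pr I cl Nm d = pr I cl Nm e → typeOf I cl d = typeOf I cl e := by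
    intro d e hd he hde
    rw [← typeOf_pr (cl := cl) (Nm := Nm) hd, ← typeOf_pr (cl := cl) (Nm := Nm) he, hde]
  intro C
  induction C with
  | top =>
      intro _ d hd
      show pr I cl Nm d ∈ (filt I cl Nm).dom ↔ d ∈ I.dom
      exact ⟨fun _ => hd, fun _ => hprdom d hd⟩
  | bot => intro _ d hd; simp [Concept.interp]
  | atom A =>
      intro hC d hd
      show pr I cl Nm d ∈ (filt I cl Nm).cI A ↔ d ∈ I.cI A
      have key : pr I cl Nm d ∈ I.cI A ↔ d ∈ I.cI A := by
        have h1 : (Concept.atom A ∈ typeOf I cl (pr I cl Nm d)) ↔ pr I cl Nm d ∈ I.cI A :=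
          mem_typeOf hC
        have h2 : (Concept.atom A ∈ typeOf I cl d) ↔ d ∈ I.cI A := mem_typeOf hC
        rw [← h1, ← h2, typeOf_pr hd]
      exact ⟨fun h => key.mp h.2, fun h => ⟨hprdom d hd, key.mpr h⟩⟩
  | nom a =>
      intro hC d hd
      have ha : I.indI a ∈ Nm := hnom a hC
      have hpa : pr I cl Nm (I.indI a) = I.indI a := pr_of_mem ha
      show pr I cl Nm d ∈ ({pr I cl Nm (I.indI a)} ∩ (filt I cl Nm).dom : Set U) ↔
        d ∈ ({I.indI a} ∩ I.dom : Set U)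
      constructor
      · rintro ⟨h1, -⟩
        have h1' : pr I cl Nm d = pr I cl Nm (I.indI a) := h1
        have ht : typeOf I cl d = typeOf I cl (I.indI a) := hsame hd (hP a) h1'
        have hmem : Concept.nom a ∈ typeOf I cl (I.indI a) :=
          (mem_typeOf hC).mpr ⟨rfl, hP a⟩
        have : d ∈ Concept.interp I (Concept.nom a) := (mem_typeOf hC).mp (ht ▸ hmem)
        exact this
      · rintro ⟨h1, -⟩
        have h1' : d = I.indI a := h1
        refine ⟨?_, hprdom d hd⟩
        show pr I cl Nm d = pr I cl Nm (I.indI a)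
        rw [h1']
  | neg C ih =>
      intro hC d hd
      have hC' := hneg C hC
      show pr I cl Nm d ∈ (filt I cl Nm).dom \ _ ↔ d ∈ I.dom \ _
      constructor
      · rintro ⟨-, h2⟩; exact ⟨hd, fun hx => h2 ((ih hC' d hd).mpr hx)⟩
      · rintro ⟨-, h2⟩; exact ⟨hprdom d hd, fun hx => h2 ((ih hC' d hd).mp hx)⟩
  | conj C D ihC ihD =>
      intro hC d hd
      obtain ⟨h1, h2⟩ := hconj _ _ hC
      show _ ∈ _ ∩ _ ↔ _ ∈ _ ∩ _
      rw [Set.mem_inter_iff, Set.mem_inter_iff, ihC h1 d hd, ihD h2 d hd]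
  | ex r C ih =>
      intro hC d hd
      have hCcl := hex r C hC
      show (∃ e, (pr I cl Nm d, e) ∈ Role.interp (filt I cl Nm) r ∧
          e ∈ Concept.interp (filt I cl Nm) C) ↔
        (∃ e, (d, e) ∈ Role.interp I r ∧ e ∈ Concept.interp I C)
      constructor
      · rintro ⟨e, hre, heC⟩
        rw [filt_role] at hre
        obtain ⟨⟨a, b⟩, hab, heq⟩ := hre
        have h1 : pr I cl Nm a = pr I cl Nm d := congrArg Prod.fst heq
        have h2 : pr I cl Nm b = e := congrArg Prod.snd heq
        have ha : a ∈ I.dom := (roleInterp_sub I r hab).1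
        have hb : b ∈ I.dom := (roleInterp_sub I r hab).2
        have hbC : b ∈ Concept.interp I C := (ih hCcl b hb).mp (h2 ▸ heC)
        have haex : a ∈ Concept.interp I (Concept.ex r C) := ⟨b, hab, hbC⟩
        have hmem : Concept.ex r C ∈ typeOf I cl a := (mem_typeOf hC).mpr haex
        have ht : typeOf I cl a = typeOf I cl d := hsame ha hd h1
        exact (mem_typeOf hC).mp (ht ▸ hmem)
      · rintro ⟨e, hre, heC⟩
        have he : e ∈ I.dom := (roleInterp_sub I r hre).2
        refine ⟨pr I cl Nm e, ?_, (ih hCcl e he).mpr heC⟩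
        rw [filt_role]
        exact ⟨(d, e), hre, rfl⟩

lemma filt_sat (I : Interp U) (cl : Finset Concept) (Nm : Finset U)
    (hP : I.Proper) (α : Assertion)
    (hind : ∀ a ∈ α.indNames, I.indI a ∈ Nm) (hs : Assertion.sat I α) :
    Assertion.sat (filt I cl Nm) α := by
  cases α with
  | ca A a =>
      have ha : I.indI a ∈ Nm := hind a (by simp [Assertion.indNames])
      show pr I cl Nm (I.indI a) ∈ (filt I cl Nm).cI A
      rw [pr_of_mem ha]
      exact ⟨⟨I.indI a, hP a, pr_of_mem ha⟩, hs⟩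
  | ra r a b =>
      exact ⟨(I.indI a, I.indI b), hs, rfl⟩

end Statement5Aux

/-- If some interpretation has finite cost, then the optimal cost is at
most `W · (n·|A| + n²·|T|)`, where `W` is the maximum finite weight and
`n = |A| + |T| + 2^(2|T|²)`. -/
theorem statement5 (T : Finset Axiom) (A : Finset Assertion)
    (wT : Axiom → ℕ∞) (wA : Assertion → ℕ∞)
    (hwT : ∀ τ ∈ T, 1 ≤ wT τ) (hwA : ∀ α ∈ A, 1 ≤ wA α)
    (h : ∃ (U : Type) (I : Interp U), I.Proper ∧ cost T A wT wA I < ⊤) :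
    optCost T A wT wA ≤
      ((maxFinWeight T A wT wA *
        ((aboxSize A + tboxSize T + 2 ^ (2 * tboxSize T ^ 2)) * aboxSize A +
          (aboxSize A + tboxSize T + 2 ^ (2 * tboxSize T ^ 2)) ^ 2 * tboxSize T) : ℕ) : ℕ∞) := by
  classical
  obtain ⟨V, I, hP, hfin⟩ := h
  set W : ℕ := maxFinWeight T A wT wA with hW
  set tb : ℕ := tboxSize T with htb
  set ab : ℕ := aboxSize A with hab
  set n : ℕ := ab + tb + 2 ^ (2 * tb ^ 2) with hn
  -- the closure and the named elements
  set cl : Finset Concept := T.biUnion axSubs with hcl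
  set Nm : Finset V := (kbInds T A).image I.indI with hNm
  have hN : ↑Nm ⊆ I.dom := by
    intro x hx
    simp only [hNm, Finset.coe_image, Set.mem_image, Finset.mem_coe] at hx
    obtain ⟨a, -, rfl⟩ := hx
    exact hP a
  -- closure properties
  have hclT : ∀ {X Y : Concept}, X ∈ cl → Y ∈ subsC X → Y ∈ cl := by
    intro X Y hX hY
    rw [hcl, Finset.mem_biUnion] at hX ⊢
    obtain ⟨τ, hτ, hXτ⟩ := hX
    exact ⟨τ, hτ, axSubs_trans hXτ hY⟩
  have hneg : ∀ D, Concept.neg D ∈ cl → D ∈ cl := fun D hD =>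
    hclT hD (by simp [subsC, mem_subsC_self])
  have hconj : ∀ D E, Concept.conj D E ∈ cl → D ∈ cl ∧ E ∈ cl := fun D E hD =>
    ⟨hclT hD (by simp [subsC, mem_subsC_self]),
     hclT hD (by simp [subsC, mem_subsC_self])⟩
  have hex : ∀ r D, Concept.ex r D ∈ cl → D ∈ cl := fun r D hD =>
    hclT hD (by simp [subsC, mem_subsC_self])
  have hnom : ∀ a, Concept.nom a ∈ cl → I.indI a ∈ Nm := by
    intro a ha
    rw [hcl, Finset.mem_biUnion] at ha
    obtain ⟨τ, hτ, haτ⟩ := ha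
    have hkb : a ∈ kbInds T A := by
      cases τ with
      | ci C D =>
          simp only [axSubs, Finset.mem_union] at haτ
          have : a ∈ Axiom.indNames (Axiom.ci C D) := by
            rcases haτ with h | h
            · exact Finset.mem_union_left _ (nom_mem_subsC h)
            · exact Finset.mem_union_right _ (nom_mem_subsC h)
          exact Finset.mem_union_left _ (Finset.mem_biUnion.mpr ⟨_, hτ, this⟩)
      | ri r s => simp [axSubs] at haτ
    exact Finset.mem_image.mpr ⟨a, hkb, rfl⟩
  set J : Interp V := filt I cl Nm with hJ
  have hJP : J.Proper := fun a => ⟨I.indI a, hP a, rfl⟩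
  have htruth := truth I cl Nm hP hN hneg hconj hex hnom
  -- facts from finiteness of the cost of I
  rw [cost] at hfin
  have hS1 : ∀ τ ∈ T, wT τ * Axiom.vioCount I τ < ⊤ := by
    have h1 : (∑ τ ∈ T, wT τ * Axiom.vioCount I τ) < ⊤ :=
      lt_of_le_of_lt le_self_add hfin
    exact fun τ hτ => WithTop.sum_lt_top.mp h1 τ hτ
  have hS2 : ∀ α ∈ A, (if Assertion.sat I α then 0 else wA α) < ⊤ := by
    have h2 : (∑ α ∈ A, (if Assertion.sat I α then 0 else wA α)) < ⊤ :=
      lt_of_le_of_lt le_add_self hfin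
    exact fun α hα => WithTop.sum_lt_top.mp h2 α hα
  have hinfT : ∀ τ ∈ T, wT τ = ⊤ → Axiom.vioCount I τ = 0 := by
    intro τ hτ htop
    by_contra hne
    have := hS1 τ hτ
    rw [htop, ENat.top_mul hne] at this
    exact absurd this (lt_irrefl _)
  -- zero-violation axioms stay zero-violation
  have hvio0 : ∀ τ ∈ T, Axiom.vioCount I τ = 0 → Axiom.vioCount J τ = 0 := by
    intro τ hτ h0
    cases τ with
    | ci C D =>
        have hCcl : C ∈ cl := Finset.mem_biUnion.mpr
          ⟨_, hτ, by simp [axSubs, mem_subsC_self]⟩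
        have hDcl : D ∈ cl := Finset.mem_biUnion.mpr
          ⟨_, hτ, by simp [axSubs, mem_subsC_self]⟩
        have hsub : Concept.interp I C ⊆ Concept.interp I D := by
          have := Set.encard_eq_zero.mp h0
          exact Set.diff_eq_empty.mp this
        show (vioCI J C D).encard = 0
        rw [Set.encard_eq_zero, vioCI, Set.diff_eq_empty]
        intro x hx
        obtain ⟨d, hd, rfl⟩ := interp_sub J C hx
        exact (htruth D hDcl d hd).mpr (hsub ((htruth C hCcl d hd).mp hx))
    | ri r s =>
        have hsub : Role.interp I r ⊆ Role.interp I s :=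
          Set.diff_eq_empty.mp (Set.encard_eq_zero.mp h0)
        show (vioRI J r s).encard = 0
        rw [Set.encard_eq_zero, vioRI, Set.diff_eq_empty, hJ, filt_role, filt_role]
        exact Set.image_mono hsub
  -- ABox satisfaction is preserved
  have hsatpres : ∀ α ∈ A, Assertion.sat I α → Assertion.sat J α := by
    intro α hα hs
    refine filt_sat I cl Nm hP α ?_ hs
    intro a ha
    have : a ∈ kbInds T A :=
      Finset.mem_union_right _ (Finset.mem_biUnion.mpr ⟨α, hα, ha⟩)
    exact Finset.mem_image.mpr ⟨a, this, rfl⟩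
  -- the small domain
  set D0 : Finset V := Nm ∪ (cl.powerset).image (rep I cl) with hD0
  set m : ℕ := D0.card with hm
  have hJdom : J.dom ⊆ ↑D0 := by
    rintro x ⟨d, hd, rfl⟩
    by_cases hdN : d ∈ Nm
    · rw [pr_of_mem hdN]
      exact_mod_cast Finset.mem_union_left _ hdN
    · have hpr : pr I cl Nm d = rep I cl (typeOf I cl d) := by
        rw [pr, if_neg hdN, if_pos hd]
      rw [hpr]
      have : typeOf I cl d ∈ cl.powerset := Finset.mem_powerset.mpr (typeOf_subset I cl d)
      exact_mod_cast Finset.mem_union_right _ (Finset.mem_image.mpr ⟨_, this, rfl⟩)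
  -- cardinality bounds
  have hTcard : T.card ≤ tb := by
    rw [htb, tboxSize]
    calc T.card = ∑ τ ∈ T, 1 := by simp
      _ ≤ ∑ τ ∈ T, Axiom.size τ := Finset.sum_le_sum (fun τ _ => by
          cases τ <;> simp [Axiom.size] <;> omega)
      _ = tboxSize T := rfl
  have hAcard : A.card ≤ ab := by
    rw [hab, aboxSize]
    calc A.card = ∑ α ∈ A, 1 := by simp
      _ ≤ ∑ α ∈ A, Assertion.size α := Finset.sum_le_sum (fun α _ => by
          cases α <;> simp [Assertion.size])
  have hclcard : cl.card ≤ tb := by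
    rw [hcl, htb, tboxSize]
    exact (Finset.card_biUnion_le).trans (Finset.sum_le_sum fun τ _ => axSubs_card τ)
  have hkbcard : (kbInds T A).card ≤ tb + ab := by
    rw [kbInds, htb, hab, tboxSize, aboxSize]
    calc (T.biUnion Axiom.indNames ∪ aboxInds A).card
        ≤ (T.biUnion Axiom.indNames).card + (aboxInds A).card := Finset.card_union_le _ _
      _ ≤ (∑ τ ∈ T, (Axiom.indNames τ).card) + ∑ α ∈ A, (Assertion.indNames α).card := by
          gcongr <;> exact Finset.card_biUnion_le
      _ ≤ (∑ τ ∈ T, Axiom.size τ) + ∑ α ∈ A, Assertion.size α := by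
          gcongr with τ _ α _
          · exact axiom_indNames_card τ
          · exact assertion_indNames_card α
  have hmn : m ≤ n := by
    have h1 : D0.card ≤ Nm.card + ((cl.powerset).image (rep I cl)).card :=
      Finset.card_union_le _ _
    have h2 : Nm.card ≤ (kbInds T A).card := Finset.card_image_le
    have h3 : ((cl.powerset).image (rep I cl)).card ≤ 2 ^ cl.card := by
      calc ((cl.powerset).image (rep I cl)).card ≤ cl.powerset.card := Finset.card_image_le
        _ = 2 ^ cl.card := Finset.card_powerset cl
    have h4 : 2 ^ cl.card ≤ 2 ^ (2 * tb ^ 2) := by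
      apply Nat.pow_le_pow_right (by norm_num)
      have : tb ≤ 2 * tb ^ 2 := by nlinarith [sq_nonneg tb]
      omega
    rw [hm, hn]
    omega
  have hn1 : 0 < n := by
    have := Nat.one_le_two_pow (n := 2 * tb ^ 2)
    omega
  -- bound the cost of J
  have hvioJ : ∀ τ ∈ T, Axiom.vioCount J τ ≤ ((m * m : ℕ) : ℕ∞) := by
    intro τ _
    have hdomcard : (J.dom).encard ≤ (m : ℕ∞) := by
      calc (J.dom).encard ≤ (↑D0 : Set V).encard := Set.encard_mono hJdom
        _ = (m : ℕ∞) := Set.encard_coe_eq_coe_finsetCard D0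
    have hmm : (m : ℕ∞) ≤ ((m * m : ℕ) : ℕ∞) := by
      apply Nat.cast_le.mpr
      rcases Nat.eq_zero_or_pos m with h | h
      · simp [h]
      · calc m = m * 1 := (Nat.mul_one m).symm
          _ ≤ m * m := Nat.mul_le_mul_left m h
    cases τ with
    | ci C D =>
        calc (vioCI J C D).encard ≤ (J.dom).encard :=
              Set.encard_mono ((Set.diff_subset).trans (interp_sub J C))
          _ ≤ (m : ℕ∞) := hdomcard
          _ ≤ _ := hmm
    | ri r s =>
        have hsub : vioRI J r s ⊆ ↑(D0 ×ˢ D0) := by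
          intro p hp
          have h1 := roleInterp_sub J r hp.1
          rw [Finset.coe_product]
          exact ⟨hJdom h1.1, hJdom h1.2⟩
        calc (vioRI J r s).encard ≤ (↑(D0 ×ˢ D0) : Set (V × V)).encard :=
              Set.encard_mono hsub
          _ = ((D0 ×ˢ D0).card : ℕ∞) := Set.encard_coe_eq_coe_finsetCard _
          _ = ((m * m : ℕ) : ℕ∞) := by rw [Finset.card_product]
  have hterm1 : ∀ τ ∈ T, wT τ * Axiom.vioCount J τ ≤ ((W * (m * m) : ℕ) : ℕ∞) := by
    intro τ hτ
    by_cases hw : wT τ = ⊤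
    · rw [hw, hvio0 τ hτ (hinfT τ hτ hw), mul_zero]
      exact zero_le
    · have hle : wT τ ≤ (W : ℕ∞) := by
        rw [← ENat.coe_toNat hw]
        apply Nat.cast_le.mpr
        rw [hW, maxFinWeight]
        exact le_trans (Finset.le_sup (f := fun τ => (wT τ).toNat) hτ) le_sup_left
      calc wT τ * Axiom.vioCount J τ ≤ (W : ℕ∞) * ((m * m : ℕ) : ℕ∞) :=
            mul_le_mul' hle (hvioJ τ hτ)
        _ = ((W * (m * m) : ℕ) : ℕ∞) := by push_cast; ring
  have hterm2 : ∀ α ∈ A, (if Assertion.sat J α then 0 else wA α) ≤ ((W : ℕ) : ℕ∞) := by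
    intro α hα
    split_ifs with hs
    · exact zero_le
    · have hviol : ¬ Assertion.sat I α := fun hsat => hs (hsatpres α hα hsat)
      have hwne : wA α ≠ ⊤ := by
        intro htop
        have := hS2 α hα
        rw [if_neg hviol, htop] at this
        exact absurd this (lt_irrefl _)
      rw [← ENat.coe_toNat hwne]
      apply Nat.cast_le.mpr
      rw [hW, maxFinWeight]
      exact le_trans (Finset.le_sup (f := fun α => (wA α).toNat) hα) le_sup_right
  have hcostJ : cost T A wT wA J ≤ ((T.card * (W * (m * m)) + A.card * W : ℕ) : ℕ∞) := by
    rw [cost]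
    have b1 : (∑ τ ∈ T, wT τ * Axiom.vioCount J τ) ≤ ((T.card * (W * (m * m)) : ℕ) : ℕ∞) := by
      calc (∑ τ ∈ T, wT τ * Axiom.vioCount J τ)
          ≤ T.card • ((W * (m * m) : ℕ) : ℕ∞) := Finset.sum_le_card_nsmul _ _ _ hterm1
        _ = ((T.card * (W * (m * m)) : ℕ) : ℕ∞) := by rw [nsmul_eq_mul]; push_cast; ring
    have b2 : (∑ α ∈ A, (if Assertion.sat J α then 0 else wA α)) ≤ ((A.card * W : ℕ) : ℕ∞) := by
      calc (∑ α ∈ A, (if Assertion.sat J α then 0 else wA α))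
          ≤ A.card • ((W : ℕ) : ℕ∞) := Finset.sum_le_card_nsmul _ _ _ hterm2
        _ = ((A.card * W : ℕ) : ℕ∞) := by rw [nsmul_eq_mul]; push_cast; ring
    rw [Nat.cast_add]
    exact add_le_add b1 b2
  -- conclude
  have hopt : optCost T A wT wA ≤ cost T A wT wA J :=
    sInf_le ⟨V, J, hJP, rfl⟩
  refine hopt.trans (hcostJ.trans ?_)
  apply Nat.cast_le.mpr
  have e1 : m * m ≤ n * n := Nat.mul_le_mul hmn hmn
  calc T.card * (W * (m * m)) + A.card * W
      ≤ tb * (W * (n * n)) + ab * W := by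
        apply Nat.add_le_add
        · exact Nat.mul_le_mul hTcard (Nat.mul_le_mul le_rfl e1)
        · exact Nat.mul_le_mul hAcard le_rfl
    _ ≤ W * (n * ab + n ^ 2 * tb) := by nlinarith [hn1, Nat.zero_le (W * ab)]


end DL
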